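/- Let H be an invertible m×m real matrix, H̄ := HH', Ω̂ an m×m positive semidefinite symmetric real matrix, T an m×m real matrix, and d, λ̂ ∈ ℝ^m. Set M := H'Ω̂H + I_m (which is positive definite), m₊ := λ̂ − Ω̂d, Ω := T'(I_m − Ω̂HM⁻¹H')Ω̂T and λ := T'(I_m − Ω̂HM⁻¹H')m₊. Then Ω is positive semidefinite and there exists a constant C > 0, independent of z, such that for all z ∈ ℝ^m: ∫_{ℝ^m} φ_{d+Tz, H̄}(w) exp(−½ w'Ω̂w + λ̂'w) dw = C · exp(−½ z'Ωz + λ'z). (This is the one-step backward recursion of the Rao-Blackwellized FFBS smoother.) -/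

import Mathlib

open MeasureTheory Matrix Real

/-- Gaussian density on `ℝ^k` with mean `μ` and covariance `S`. -/
noncomputable def gaussPdf {k : ℕ} (μ : Fin k → ℝ) (S : Matrix (Fin k) (Fin k) ℝ)
    (x : Fin k → ℝ) : ℝ :=
  ((2 * π) ^ (k : ℝ) * S.det) ^ (-(1 : ℝ) / 2) *
    Real.exp (-(1 / 2 : ℝ) * ((x - μ) ⬝ᵥ (S⁻¹ *ᵥ (x - μ))))

lemma dot_mulVec_eq {m : ℕ} (B : Matrix (Fin m) (Fin m) ℝ) (x y : Fin m → ℝ) :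
    x ⬝ᵥ B *ᵥ y = (Bᵀ *ᵥ x) ⬝ᵥ y := by
  rw [Matrix.dotProduct_mulVec, Matrix.mulVec_transpose]

lemma dot_mulVec_left {m : ℕ} (B : Matrix (Fin m) (Fin m) ℝ) (x z : Fin m → ℝ) :
    (B *ᵥ x) ⬝ᵥ z = x ⬝ᵥ (Bᵀ *ᵥ z) := by
  rw [dot_mulVec_eq Bᵀ x z, Matrix.transpose_transpose]

lemma dot_symm {m : ℕ} {S : Matrix (Fin m) (Fin m) ℝ} (hS : Sᵀ = S) (x y : Fin m → ℝ) :
    x ⬝ᵥ S *ᵥ y = y ⬝ᵥ S *ᵥ x := by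
  rw [dot_mulVec_eq, hS, dotProduct_comm]

lemma key_sq {m : ℕ} {A : Matrix (Fin m) (Fin m) ℝ} (hA : Aᵀ = A) (a w : Fin m → ℝ) :
    -(1/2 : ℝ) * ((w - a) ⬝ᵥ A *ᵥ (w - a)) =
      -(1/2 : ℝ) * (w ⬝ᵥ A *ᵥ w) + (A *ᵥ a) ⬝ᵥ w - (1/2 : ℝ) * (a ⬝ᵥ A *ᵥ a) := by
  have h1 : w ⬝ᵥ A *ᵥ a = (A *ᵥ a) ⬝ᵥ w := by rw [dot_symm hA, dot_mulVec_eq, hA]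
  have h2 : a ⬝ᵥ A *ᵥ w = (A *ᵥ a) ⬝ᵥ w := by rw [dot_mulVec_eq, hA]
  simp only [Matrix.mulVec_sub, dotProduct_sub, sub_dotProduct, h1, h2]
  ring

lemma continuous_quad {m : ℕ} (A : Matrix (Fin m) (Fin m) ℝ) :
    Continuous fun v : Fin m → ℝ => v ⬝ᵥ A *ᵥ v := by
  unfold dotProduct Matrix.mulVec
  dsimp
  exact continuous_finset_sum _ fun i _ => (continuous_apply i).mul
    (continuous_finset_sum _ fun j _ => (continuous_const.mul (continuous_apply j)))

open scoped MatrixOrder in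
lemma psd_sqrt_exists {m : ℕ} {A : Matrix (Fin m) (Fin m) ℝ} (hA : A.PosSemidef) :
    ∃ B : Matrix (Fin m) (Fin m) ℝ, B * B = A ∧ B.PosSemidef :=
  ⟨CFC.sqrt A, CFC.sqrt_mul_sqrt_self A hA.nonneg, (CFC.sqrt_nonneg A).posSemidef⟩

lemma integral_exp_neg_half_quad_pos {m : ℕ} {A : Matrix (Fin m) (Fin m) ℝ} (hA : A.PosDef) :
    0 < ∫ v : Fin m → ℝ, Real.exp (-(1/2 : ℝ) * (v ⬝ᵥ A *ᵥ v)) := by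
  classical
  obtain ⟨B, hBB, hBpsd⟩ := psd_sqrt_exists hA.posSemidef
  have hBt : Bᵀ = B := by
    have h := hBpsd.isHermitian
    rwa [Matrix.IsHermitian, Matrix.conjTranspose_eq_transpose_of_trivial] at h
  have hdetB : B.det ≠ 0 := by
    intro h
    have : A.det = B.det * B.det := by rw [← hBB, Matrix.det_mul]
    rw [h, mul_zero] at this
    exact hA.det_pos.ne' this
  have hquad : ∀ v : Fin m → ℝ, v ⬝ᵥ A *ᵥ v = (B *ᵥ v) ⬝ᵥ (B *ᵥ v) := fun v => by
    rw [← hBB, ← Matrix.mulVec_mulVec, dot_mulVec_eq, hBt]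
  have hgc : Continuous fun u : Fin m → ℝ => Real.exp (-(1/2 : ℝ) * (u ⬝ᵥ u)) := by
    apply Real.continuous_exp.comp
    apply continuous_const.mul
    unfold dotProduct
    exact continuous_finset_sum _ fun i _ => (continuous_apply i).mul (continuous_apply i)
  have hTm : Continuous (Matrix.toLin' B) := LinearMap.continuous_of_finiteDimensional _
  have step1 : (∫ v : Fin m → ℝ, Real.exp (-(1/2 : ℝ) * (v ⬝ᵥ A *ᵥ v)))
      = ∫ u, Real.exp (-(1/2 : ℝ) * (u ⬝ᵥ u)) ∂(Measure.map (Matrix.toLin' B) volume) := by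
    rw [MeasureTheory.integral_map hTm.measurable.aemeasurable hgc.aestronglyMeasurable]
    congr 1 with v
    rw [Matrix.toLin'_apply, hquad v]
  have step2 : (∫ u, Real.exp (-(1/2 : ℝ) * (u ⬝ᵥ u))
        ∂(Measure.map (Matrix.toLin' B) volume))
      = |B.det⁻¹| * ∫ u : Fin m → ℝ, Real.exp (-(1/2 : ℝ) * (u ⬝ᵥ u)) := by
    rw [Real.map_matrix_volume_pi_eq_smul_volume_pi hdetB, MeasureTheory.integral_smul_measure,
      ENNReal.toReal_ofReal (abs_nonneg _), smul_eq_mul]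
  have hgval : (∫ u : Fin m → ℝ, Real.exp (-(1/2 : ℝ) * (u ⬝ᵥ u)))
      = (∫ x : ℝ, Real.exp (-(1/2 : ℝ) * (x * x))) ^ m := by
    have h1 : ∀ u : Fin m → ℝ, Real.exp (-(1/2 : ℝ) * (u ⬝ᵥ u))
        = ∏ i, Real.exp (-(1/2 : ℝ) * (u i * u i)) := by
      intro u
      rw [← Real.exp_sum]
      congr 1
      rw [dotProduct, Finset.mul_sum]
    calc (∫ u : Fin m → ℝ, Real.exp (-(1/2 : ℝ) * (u ⬝ᵥ u)))
        = ∫ u : Fin m → ℝ, ∏ i, Real.exp (-(1/2 : ℝ) * (u i * u i)) := by simp_rw [h1]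
      _ = (∫ x : ℝ, Real.exp (-(1/2 : ℝ) * (x * x))) ^ (Fintype.card (Fin m)) :=
          MeasureTheory.integral_fintype_prod_eq_pow (fun x : ℝ => Real.exp (-(1/2 : ℝ) * (x * x)))
      _ = _ := by rw [Fintype.card_fin]
  have hpos1 : 0 < ∫ x : ℝ, Real.exp (-(1/2 : ℝ) * (x * x)) := by
    have h2 : (∫ x : ℝ, Real.exp (-(1/2 : ℝ) * (x * x))) = √(π / (1/2 : ℝ)) := by
      rw [← integral_gaussian (1/2 : ℝ)]
      congr 1 with x
      ring_nf
    rw [h2]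
    exact Real.sqrt_pos.mpr (by positivity)
  rw [step1, step2, hgval]
  have hd : 0 < |B.det⁻¹| := abs_pos.mpr (inv_ne_zero hdetB)
  positivity

lemma integral_exp_quadratic {m : ℕ} {A : Matrix (Fin m) (Fin m) ℝ} (hA : A.PosDef)
    (hAt : Aᵀ = A) (b : Fin m → ℝ) :
    (∫ w : Fin m → ℝ, Real.exp (-(1/2 : ℝ) * (w ⬝ᵥ A *ᵥ w) + b ⬝ᵥ w))
      = (∫ v : Fin m → ℝ, Real.exp (-(1/2 : ℝ) * (v ⬝ᵥ A *ᵥ v)))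
        * Real.exp ((1/2 : ℝ) * ((A⁻¹ *ᵥ b) ⬝ᵥ b)) := by
  classical
  have hdet : IsUnit A.det := isUnit_iff_ne_zero.mpr hA.det_pos.ne'
  set a := A⁻¹ *ᵥ b with ha
  have hba : A *ᵥ a = b := by
    rw [ha, Matrix.mulVec_mulVec, Matrix.mul_nonsing_inv _ hdet, Matrix.one_mulVec]
  have hpt : ∀ w : Fin m → ℝ,
      Real.exp (-(1/2 : ℝ) * (w ⬝ᵥ A *ᵥ w) + b ⬝ᵥ w)
        = Real.exp (-(1/2 : ℝ) * ((w - a) ⬝ᵥ A *ᵥ (w - a))) * Real.exp ((1/2 : ℝ) * (a ⬝ᵥ b)) := by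
    intro w
    rw [← Real.exp_add, key_sq hAt a w, hba]
    congr 1
    ring
  calc (∫ w : Fin m → ℝ, Real.exp (-(1/2 : ℝ) * (w ⬝ᵥ A *ᵥ w) + b ⬝ᵥ w))
      = ∫ w : Fin m → ℝ, Real.exp (-(1/2 : ℝ) * ((w - a) ⬝ᵥ A *ᵥ (w - a)))
          * Real.exp ((1/2 : ℝ) * (a ⬝ᵥ b)) := by simp_rw [hpt]
    _ = (∫ w : Fin m → ℝ, Real.exp (-(1/2 : ℝ) * ((w - a) ⬝ᵥ A *ᵥ (w - a))))
          * Real.exp ((1/2 : ℝ) * (a ⬝ᵥ b)) := by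
        rw [MeasureTheory.integral_mul_const]
    _ = (∫ v : Fin m → ℝ, Real.exp (-(1/2 : ℝ) * (v ⬝ᵥ A *ᵥ v)))
          * Real.exp ((1/2 : ℝ) * (a ⬝ᵥ b)) := by
        rw [MeasureTheory.integral_sub_right_eq_self
          (fun v : Fin m → ℝ => Real.exp (-(1/2 : ℝ) * (v ⬝ᵥ A *ᵥ v))) a]
    _ = _ := by rw [ha]

/-- **One-step backward recursion of the Rao-Blackwellized FFBS smoother.**
With `H̄ = HH'`, `M = H'Ω̂H + I` (positive definite), `m₊ = λ̂ − Ω̂d`,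
`Ω = T'(I − Ω̂HM⁻¹H')Ω̂T` and `λ = T'(I − Ω̂HM⁻¹H')m₊`, the matrix `Ω` is positive
semidefinite and there is a constant `C > 0` with
`∫ φ_{d+Tz,H̄}(w) exp(−½ w'Ω̂w + λ̂'w) dw = C exp(−½ z'Ωz + λ'z)` for all `z`. -/
theorem ffbs_backward_recursion_step {m : ℕ} (H : Matrix (Fin m) (Fin m) ℝ)
    (hH : IsUnit H.det) (Ωh : Matrix (Fin m) (Fin m) ℝ) (hΩh : Ωh.PosSemidef)
    (T : Matrix (Fin m) (Fin m) ℝ) (d lamh : Fin m → ℝ) :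
    (Hᵀ * Ωh * H + 1).PosDef ∧
    (Tᵀ * (1 - Ωh * H * (Hᵀ * Ωh * H + 1)⁻¹ * Hᵀ) * Ωh * T).PosSemidef ∧
    ∃ C : ℝ, 0 < C ∧ ∀ z : Fin m → ℝ,
      (∫ w : Fin m → ℝ,
          gaussPdf (d + T *ᵥ z) (H * Hᵀ) w *
            Real.exp (-(1 / 2 : ℝ) * (w ⬝ᵥ (Ωh *ᵥ w)) + lamh ⬝ᵥ w)) =
        C * Real.exp (-(1 / 2 : ℝ) *
            (z ⬝ᵥ ((Tᵀ * (1 - Ωh * H * (Hᵀ * Ωh * H + 1)⁻¹ * Hᵀ) * Ωh * T) *ᵥ z)) +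
          (Tᵀ *ᵥ ((1 - Ωh * H * (Hᵀ * Ωh * H + 1)⁻¹ * Hᵀ) *ᵥ (lamh - Ωh *ᵥ d))) ⬝ᵥ z) := by
  classical
  have hΩt : Ωhᵀ = Ωh := by
    have h := hΩh.isHermitian
    rwa [Matrix.IsHermitian, Matrix.conjTranspose_eq_transpose_of_trivial] at h
  set M : Matrix (Fin m) (Fin m) ℝ := Hᵀ * Ωh * H + 1 with hMdef
  have hMpos : M.PosDef := by
    apply Matrix.PosDef.posSemidef_add _ Matrix.PosDef.one
    have := hΩh.conjTranspose_mul_mul_same H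
    rwa [Matrix.conjTranspose_eq_transpose_of_trivial] at this
  have hMt : Mᵀ = M := by
    simp [hMdef, Matrix.transpose_add, Matrix.transpose_mul, hΩt, Matrix.mul_assoc]
  have hMdet : IsUnit M.det := isUnit_iff_ne_zero.mpr hMpos.det_pos.ne'
  have hMl : M * M⁻¹ = 1 := Matrix.mul_nonsing_inv _ hMdet
  have hMr : M⁻¹ * M = 1 := Matrix.nonsing_inv_mul _ hMdet
  have hMit : M⁻¹ᵀ = M⁻¹ := by rw [Matrix.transpose_nonsing_inv, hMt]
  have hHl : H * H⁻¹ = 1 := Matrix.mul_nonsing_inv _ hH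
  have hHr : H⁻¹ * H = 1 := Matrix.nonsing_inv_mul _ hH
  have hHt : IsUnit Hᵀ.det := by rwa [Matrix.det_transpose]
  have hHtl : Hᵀ * Hᵀ⁻¹ = 1 := Matrix.mul_nonsing_inv _ hHt
  have hHtr : Hᵀ⁻¹ * Hᵀ = 1 := Matrix.nonsing_inv_mul _ hHt
  have hc1 : ∀ X : Matrix (Fin m) (Fin m) ℝ, H * (H⁻¹ * X) = X := fun X => by
    rw [← Matrix.mul_assoc, hHl, Matrix.one_mul]
  have hc2 : ∀ X : Matrix (Fin m) (Fin m) ℝ, H⁻¹ * (H * X) = X := fun X => by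
    rw [← Matrix.mul_assoc, hHr, Matrix.one_mul]
  have hc3 : ∀ X : Matrix (Fin m) (Fin m) ℝ, Hᵀ * (Hᵀ⁻¹ * X) = X := fun X => by
    rw [← Matrix.mul_assoc, hHtl, Matrix.one_mul]
  have hc4 : ∀ X : Matrix (Fin m) (Fin m) ℝ, Hᵀ⁻¹ * (Hᵀ * X) = X := fun X => by
    rw [← Matrix.mul_assoc, hHtr, Matrix.one_mul]
  have hc5 : ∀ X : Matrix (Fin m) (Fin m) ℝ, M * (M⁻¹ * X) = X := fun X => by
    rw [← Matrix.mul_assoc, hMl, Matrix.one_mul]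
  have hc6 : ∀ X : Matrix (Fin m) (Fin m) ℝ, M⁻¹ * (M * X) = X := fun X => by
    rw [← Matrix.mul_assoc, hMr, Matrix.one_mul]
  set P : Matrix (Fin m) (Fin m) ℝ := 1 - Ωh * H * M⁻¹ * Hᵀ with hPdef
  set Si : Matrix (Fin m) (Fin m) ℝ := (H * Hᵀ)⁻¹ with hSidef
  set K : Matrix (Fin m) (Fin m) ℝ := H * M⁻¹ * Hᵀ with hKdef
  set N : Matrix (Fin m) (Fin m) ℝ := P * Ωh with hNdef
  have hSi : Si = Hᵀ⁻¹ * H⁻¹ := Matrix.mul_inv_rev H Hᵀ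
  have hΩexp : Hᵀ⁻¹ * ((M - 1) * H⁻¹) = Ωh := by
    have h : M - 1 = Hᵀ * Ωh * H := by rw [hMdef]; exact add_sub_cancel_right _ _
    rw [h]
    simp only [Matrix.mul_assoc, hHl, Matrix.mul_one, hc4]
  have hPalt : P = Hᵀ⁻¹ * (M⁻¹ * Hᵀ) := by
    rw [hPdef, ← hΩexp]
    simp only [Matrix.mul_assoc, Matrix.sub_mul, Matrix.mul_sub, Matrix.one_mul, Matrix.mul_one,
      hc2, hc5, hc4, hHtr]
    rw [sub_sub_cancel]
  have hKt : Kᵀ = K := by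
    rw [hKdef]
    simp [Matrix.transpose_mul, hMit, Matrix.mul_assoc]
  have hSit : Siᵀ = Si := by
    have h : (H * Hᵀ)ᵀ = H * Hᵀ := by simp [Matrix.transpose_mul]
    rw [hSidef, Matrix.transpose_nonsing_inv, h]
  have hSK : Si * K = P := by
    rw [hSi, hPalt, hKdef]
    simp only [Matrix.mul_assoc, hc2]
  have hKS : K * Si = Pᵀ := by
    rw [← hSK, Matrix.transpose_mul, hKt, hSit]
  have hNalt : N = Si - Hᵀ⁻¹ * (M⁻¹ * H⁻¹) := by
    rw [hNdef, hPalt, ← hΩexp, hSi]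
    simp only [Matrix.mul_assoc, hc4, hc3, Matrix.mul_sub, Matrix.sub_mul, Matrix.one_mul,
      Matrix.mul_one, hc6, hc5]
  have hSKS : Si * K * Si = Si - N := by
    rw [hNalt, sub_sub_cancel, hSi, hKdef]
    simp only [Matrix.mul_assoc, hc2, hc3, hc4]
  have hNt : Nᵀ = N := by
    rw [hNdef, hPdef]
    simp [Matrix.transpose_mul, Matrix.sub_mul, Matrix.mul_sub, Matrix.transpose_sub,
      Matrix.transpose_one, hΩt, hMit, Matrix.mul_assoc, Matrix.one_mul, Matrix.mul_one]
  have hAalt : Si + Ωh = Hᵀ⁻¹ * (M * H⁻¹) := by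
    rw [hSi, ← hΩexp, ← Matrix.mul_add]
    congr 1
    rw [Matrix.sub_mul, Matrix.one_mul, add_sub_cancel]
  have hAK : (Si + Ωh) * K = 1 := by
    rw [hAalt, hKdef]
    simp only [Matrix.mul_assoc, hc2, hc5, hHtr]
  have hAinv : (Si + Ωh)⁻¹ = K := Matrix.inv_eq_right_inv hAK
  have hHHt : (H * Hᵀ).PosDef := by
    rw [Matrix.posDef_iff_dotProduct_mulVec]
    constructor
    · show (H * Hᵀ)ᴴ = H * Hᵀ
      rw [Matrix.conjTranspose_eq_transpose_of_trivial]
      simp [Matrix.transpose_mul]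
    · intro x hx
      have hsx : star x = x := by simp
      have hv : Hᵀ *ᵥ x ≠ 0 := by
        intro h0
        apply hx
        have : Hᵀ⁻¹ *ᵥ (Hᵀ *ᵥ x) = x := by
          rw [Matrix.mulVec_mulVec, hHtr, Matrix.one_mulVec]
        rw [h0, Matrix.mulVec_zero] at this
        exact this.symm
      have key : star x ⬝ᵥ (H * Hᵀ) *ᵥ x = star (Hᵀ *ᵥ x) ⬝ᵥ (Hᵀ *ᵥ x) := by
        rw [hsx, ← Matrix.mulVec_mulVec, dot_mulVec_eq]
        rw [star_trivial]
      rw [key]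
      exact Matrix.dotProduct_star_self_pos_iff.mpr hv
  have hSipos : Si.PosDef := hHHt.inv
  have hApos : (Si + Ωh).PosDef := hSipos.add_posSemidef hΩh
  have hAt : (Si + Ωh)ᵀ = Si + Ωh := by rw [Matrix.transpose_add, hSit, hΩt]
  -- PSD of Ω via push-through identity
  obtain ⟨V, hVV, hVpsd⟩ := psd_sqrt_exists hΩh
  have hVt : Vᵀ = V := by
    have h := hVpsd.isHermitian
    rwa [Matrix.IsHermitian, Matrix.conjTranspose_eq_transpose_of_trivial] at h
  set S : Matrix (Fin m) (Fin m) ℝ := V * H with hSdef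
  set E : Matrix (Fin m) (Fin m) ℝ := 1 + S * Sᵀ with hEdef
  have hSSt : (S * Sᵀ).PosSemidef := by
    have := Matrix.posSemidef_self_mul_conjTranspose S
    rwa [Matrix.conjTranspose_eq_transpose_of_trivial] at this
  have hEpos : E.PosDef := Matrix.PosDef.add_posSemidef Matrix.PosDef.one hSSt
  have hEdet : IsUnit E.det := isUnit_iff_ne_zero.mpr hEpos.det_pos.ne'
  have hEl : E * E⁻¹ = 1 := Matrix.mul_nonsing_inv _ hEdet
  have hMS : M = Sᵀ * S + 1 := by
    rw [hMdef, hSdef]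
    simp [Matrix.transpose_mul, hVt, Matrix.mul_assoc, ← hVV]
  have hMinv : M⁻¹ = 1 - Sᵀ * (E⁻¹ * S) := by
    apply Matrix.inv_eq_right_inv
    have h3 : S * (Sᵀ * (E⁻¹ * S)) = S - E⁻¹ * S := by
      rw [← Matrix.mul_assoc S Sᵀ _]
      have hSSE : S * Sᵀ = E - 1 := by rw [hEdef, add_sub_cancel_left]
      rw [hSSE, Matrix.sub_mul, Matrix.one_mul, ← Matrix.mul_assoc, hEl, Matrix.one_mul]
    rw [hMS]
    have h4 : Sᵀ * S * (Sᵀ * (E⁻¹ * S)) = Sᵀ * S - Sᵀ * (E⁻¹ * S) := by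
      rw [Matrix.mul_assoc, h3, Matrix.mul_sub]
    have expand : (Sᵀ * S + 1) * (1 - Sᵀ * (E⁻¹ * S))
        = Sᵀ * S + 1 - Sᵀ * S * (Sᵀ * (E⁻¹ * S)) - Sᵀ * (E⁻¹ * S) := by noncomm_ring
    rw [expand, h4]
    abel
  have h1M : (1 : Matrix (Fin m) (Fin m) ℝ) - M⁻¹ = Sᵀ * (E⁻¹ * S) := by
    rw [hMinv, sub_sub_cancel]
  have hNalt2 : N = Hᵀ⁻¹ * ((Sᵀ * (E⁻¹ * S)) * H⁻¹) := by
    rw [hNalt, hSi, ← h1M]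
    simp only [Matrix.mul_sub, Matrix.sub_mul, Matrix.one_mul, Matrix.mul_one, Matrix.mul_assoc]
  set G : Matrix (Fin m) (Fin m) ℝ := S * (H⁻¹ * T) with hGdef
  have hConj : Tᵀ * P * Ωh * T = Gᵀ * E⁻¹ * G := by
    have h1 : Tᵀ * P * Ωh * T = Tᵀ * (N * T) := by
      rw [hNdef]; simp only [Matrix.mul_assoc]
    rw [h1, hNalt2, hGdef]
    simp only [Matrix.transpose_mul, Matrix.transpose_nonsing_inv, Matrix.mul_assoc]
  have hPSD : (Tᵀ * P * Ωh * T).PosSemidef := by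
    rw [hConj]
    have := hEpos.inv.posSemidef.conjTranspose_mul_mul_same G
    rwa [Matrix.conjTranspose_eq_transpose_of_trivial] at this
  refine ⟨hMpos, hPSD, ?_⟩
  set J : ℝ := ∫ v : Fin m → ℝ, Real.exp (-(1/2 : ℝ) * (v ⬝ᵥ (Si + Ωh) *ᵥ v)) with hJdef
  have hJ : 0 < J := integral_exp_neg_half_quad_pos hApos
  set c1 : ℝ := ((2 * π) ^ (m : ℝ) * (H * Hᵀ).det) ^ (-(1 : ℝ) / 2) with hc1def
  have hc1pos : 0 < c1 := by
    apply Real.rpow_pos_of_pos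
    have h2 : (0 : ℝ) < (2 * π) ^ (m : ℝ) := Real.rpow_pos_of_pos (by positivity) _
    exact mul_pos h2 hHHt.det_pos
  -- the key computation, for an arbitrary mean vector μ
  have key : ∀ μ : Fin m → ℝ,
      (∫ w : Fin m → ℝ,
        gaussPdf μ (H * Hᵀ) w * Real.exp (-(1 / 2 : ℝ) * (w ⬝ᵥ (Ωh *ᵥ w)) + lamh ⬝ᵥ w))
      = c1 * J * Real.exp (-(1/2 : ℝ) * (μ ⬝ᵥ (N *ᵥ μ)) + μ ⬝ᵥ (P *ᵥ lamh)
          + (1/2 : ℝ) * (lamh ⬝ᵥ (K *ᵥ lamh))) := by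
    intro μ
    have hpt : ∀ w : Fin m → ℝ,
        gaussPdf μ (H * Hᵀ) w * Real.exp (-(1 / 2 : ℝ) * (w ⬝ᵥ (Ωh *ᵥ w)) + lamh ⬝ᵥ w)
          = (c1 * Real.exp (-(1/2 : ℝ) * (μ ⬝ᵥ Si *ᵥ μ)))
              * Real.exp (-(1/2 : ℝ) * (w ⬝ᵥ (Si + Ωh) *ᵥ w) + (Si *ᵥ μ + lamh) ⬝ᵥ w) := by
      intro w
      unfold gaussPdf
      rw [← hSidef, ← hc1def]
      rw [mul_assoc, ← Real.exp_add, mul_assoc, ← Real.exp_add]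
      congr 2
      have hks := key_sq hSit μ w
      have h5 : w ⬝ᵥ (Si + Ωh) *ᵥ w = w ⬝ᵥ Si *ᵥ w + w ⬝ᵥ Ωh *ᵥ w := by
        rw [Matrix.add_mulVec, dotProduct_add]
      have h6 : (Si *ᵥ μ + lamh) ⬝ᵥ w = (Si *ᵥ μ) ⬝ᵥ w + lamh ⬝ᵥ w :=
        add_dotProduct _ _ _
      rw [hks, h5, h6]
      ring
    have hint : (∫ w : Fin m → ℝ,
        gaussPdf μ (H * Hᵀ) w * Real.exp (-(1 / 2 : ℝ) * (w ⬝ᵥ (Ωh *ᵥ w)) + lamh ⬝ᵥ w))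
        = (c1 * Real.exp (-(1/2 : ℝ) * (μ ⬝ᵥ Si *ᵥ μ)))
            * (J * Real.exp ((1/2 : ℝ) * ((K *ᵥ (Si *ᵥ μ + lamh)) ⬝ᵥ (Si *ᵥ μ + lamh)))) := by
      calc (∫ w : Fin m → ℝ,
          gaussPdf μ (H * Hᵀ) w * Real.exp (-(1 / 2 : ℝ) * (w ⬝ᵥ (Ωh *ᵥ w)) + lamh ⬝ᵥ w))
          = ∫ w : Fin m → ℝ, (c1 * Real.exp (-(1/2 : ℝ) * (μ ⬝ᵥ Si *ᵥ μ)))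
              * Real.exp (-(1/2 : ℝ) * (w ⬝ᵥ (Si + Ωh) *ᵥ w) + (Si *ᵥ μ + lamh) ⬝ᵥ w) := by
            simp_rw [hpt]
        _ = (c1 * Real.exp (-(1/2 : ℝ) * (μ ⬝ᵥ Si *ᵥ μ)))
              * ∫ w : Fin m → ℝ,
                  Real.exp (-(1/2 : ℝ) * (w ⬝ᵥ (Si + Ωh) *ᵥ w) + (Si *ᵥ μ + lamh) ⬝ᵥ w) :=
            MeasureTheory.integral_const_mul _ _
        _ = _ := by
            rw [integral_exp_quadratic hApos hAt (Si *ᵥ μ + lamh), hAinv, ← hJdef]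
    rw [hint]
    -- the scalar exponent identity
    have hT1 : (Si *ᵥ μ) ⬝ᵥ (K *ᵥ (Si *ᵥ μ)) = μ ⬝ᵥ (Si *ᵥ μ) - μ ⬝ᵥ (N *ᵥ μ) := by
      rw [dot_mulVec_left, hSit]
      simp only [Matrix.mulVec_mulVec, ← Matrix.mul_assoc]
      rw [hSKS, Matrix.sub_mulVec, dotProduct_sub]
    have hT2 : (Si *ᵥ μ) ⬝ᵥ (K *ᵥ lamh) = μ ⬝ᵥ (P *ᵥ lamh) := by
      rw [dot_mulVec_left, hSit, Matrix.mulVec_mulVec, hSK]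
    have hT3 : lamh ⬝ᵥ (K *ᵥ (Si *ᵥ μ)) = μ ⬝ᵥ (P *ᵥ lamh) := by
      rw [Matrix.mulVec_mulVec, hKS, dot_mulVec_eq, Matrix.transpose_transpose,
        dotProduct_comm]
    have e1 : (K *ᵥ (Si *ᵥ μ + lamh)) ⬝ᵥ (Si *ᵥ μ + lamh)
        = μ ⬝ᵥ (Si *ᵥ μ) - μ ⬝ᵥ (N *ᵥ μ) + 2 * (μ ⬝ᵥ (P *ᵥ lamh)) + lamh ⬝ᵥ (K *ᵥ lamh) := by
      rw [dot_mulVec_left, hKt, Matrix.mulVec_add, dotProduct_add,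
        add_dotProduct, add_dotProduct, hT1, hT2, hT3]
      ring
    calc c1 * Real.exp (-(1/2 : ℝ) * (μ ⬝ᵥ Si *ᵥ μ))
          * (J * Real.exp ((1/2 : ℝ) * ((K *ᵥ (Si *ᵥ μ + lamh)) ⬝ᵥ (Si *ᵥ μ + lamh))))
        = c1 * J * Real.exp (-(1/2 : ℝ) * (μ ⬝ᵥ Si *ᵥ μ)
            + (1/2 : ℝ) * ((K *ᵥ (Si *ᵥ μ + lamh)) ⬝ᵥ (Si *ᵥ μ + lamh))) := by
          rw [Real.exp_add]; ring
      _ = _ := by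
          congr 1
          rw [e1]
          ring
  set c0 : ℝ := -(1/2 : ℝ) * (d ⬝ᵥ (N *ᵥ d)) + d ⬝ᵥ (P *ᵥ lamh)
      + (1/2 : ℝ) * (lamh ⬝ᵥ (K *ᵥ lamh)) with hc0def
  refine ⟨c1 * J * Real.exp c0, by positivity, fun z => ?_⟩
  rw [key (d + T *ᵥ z)]
  have c2a : d ⬝ᵥ (N *ᵥ (T *ᵥ z)) = z ⬝ᵥ (Tᵀ *ᵥ (N *ᵥ d)) := by
    rw [dot_mulVec_eq, hNt, dotProduct_comm, dot_mulVec_left T z _]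
  have c2b : (T *ᵥ z) ⬝ᵥ (N *ᵥ d) = z ⬝ᵥ (Tᵀ *ᵥ (N *ᵥ d)) := dot_mulVec_left T z _
  have c2c : (T *ᵥ z) ⬝ᵥ (N *ᵥ (T *ᵥ z)) = z ⬝ᵥ ((Tᵀ * P * Ωh * T) *ᵥ z) := by
    rw [dot_mulVec_left T z _]
    simp only [Matrix.mulVec_mulVec]
    congr 2
    rw [hNdef]
    simp only [Matrix.mul_assoc]
  have e2 : (d + T *ᵥ z) ⬝ᵥ (N *ᵥ (d + T *ᵥ z)) = d ⬝ᵥ (N *ᵥ d)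
      + 2 * (z ⬝ᵥ (Tᵀ *ᵥ (N *ᵥ d))) + z ⬝ᵥ ((Tᵀ * P * Ωh * T) *ᵥ z) := by
    rw [Matrix.mulVec_add, dotProduct_add, add_dotProduct,
      add_dotProduct, c2a, c2b, c2c]
    ring
  have e3 : (d + T *ᵥ z) ⬝ᵥ (P *ᵥ lamh) = d ⬝ᵥ (P *ᵥ lamh) + z ⬝ᵥ (Tᵀ *ᵥ (P *ᵥ lamh)) := by
    rw [add_dotProduct, dot_mulVec_left T z _]
  have e4 : (Tᵀ *ᵥ (P *ᵥ (lamh - Ωh *ᵥ d))) ⬝ᵥ z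
      = z ⬝ᵥ (Tᵀ *ᵥ (P *ᵥ lamh)) - z ⬝ᵥ (Tᵀ *ᵥ (N *ᵥ d)) := by
    rw [Matrix.mulVec_sub, Matrix.mulVec_mulVec, ← hNdef, Matrix.mulVec_sub,
      sub_dotProduct, dotProduct_comm (Tᵀ *ᵥ (P *ᵥ lamh)) z,
      dotProduct_comm (Tᵀ *ᵥ (N *ᵥ d)) z]
  have hexp : -(1/2 : ℝ) * ((d + T *ᵥ z) ⬝ᵥ (N *ᵥ (d + T *ᵥ z)))
        + (d + T *ᵥ z) ⬝ᵥ (P *ᵥ lamh) + (1/2 : ℝ) * (lamh ⬝ᵥ (K *ᵥ lamh))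
      = c0 + (-(1 / 2 : ℝ) * (z ⬝ᵥ ((Tᵀ * P * Ωh * T) *ᵥ z))
          + (Tᵀ *ᵥ (P *ᵥ (lamh - Ωh *ᵥ d))) ⬝ᵥ z) := by
    rw [e2, e3, e4, hc0def]
    ring
  rw [hexp, Real.exp_add]
  ring
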